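/- For integers d2 ≥ d1 ≥ 2 with n = d1 + d2, one has P_X(-d1(n+d1-2)/(d2(n+d1-1))) = -d1(n-1)(2d1+d2)/(d2(2d1+d2-1)³) < 0, where P_X(k) = [d2(d1d2 - 2d1 - d2 + 1)k² + 2(d2-1)(d1-1)d1·k + d1²(d1-1)]·(1-k)/(d1(n-1)). -/
import Mathlib


/-- P_X(-d1(n+d1-2)/(d2(n+d1-1))) = -d1(n-1)(2d1+d2)/(d2(2d1+d2-1)³) < 0, n = d1+d2. -/
theorem stmt_17 (d1 d2 : ℕ) (h1 : 2 ≤ d1) (h2 : d1 ≤ d2) :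
    (((d2:ℝ)*(d1*d2 - 2*d1 - d2 + 1)
          * (-(d1:ℝ)*(((d1:ℝ) + d2) + d1 - 2) / ((d2:ℝ)*(((d1:ℝ) + d2) + d1 - 1)))^2
        + 2*((d2:ℝ) - 1)*((d1:ℝ) - 1)*d1
          * (-(d1:ℝ)*(((d1:ℝ) + d2) + d1 - 2) / ((d2:ℝ)*(((d1:ℝ) + d2) + d1 - 1)))
        + (d1:ℝ)^2*(d1 - 1))
        * (1 - (-(d1:ℝ)*(((d1:ℝ) + d2) + d1 - 2) / ((d2:ℝ)*(((d1:ℝ) + d2) + d1 - 1))))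
        / ((d1:ℝ)*(((d1:ℝ) + d2) - 1))
      = -(d1:ℝ)*(((d1:ℝ) + d2) - 1)*(2*(d1:ℝ) + d2)
          / ((d2:ℝ)*(2*(d1:ℝ) + d2 - 1)^3)) ∧
    (-(d1:ℝ)*(((d1:ℝ) + d2) - 1)*(2*(d1:ℝ) + d2)
        / ((d2:ℝ)*(2*(d1:ℝ) + d2 - 1)^3) < 0) := by
  have hd1 : (2:ℝ) ≤ (d1:ℝ) := by exact_mod_cast h1
  have hd2 : (d1:ℝ) ≤ (d2:ℝ) := by exact_mod_cast h2
  have h1p : (0:ℝ) < d1 := by linarith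
  have h2p : (0:ℝ) < d2 := by linarith
  have ha : (d1:ℝ) + d2 - 1 > 0 := by linarith
  have hb : (2:ℝ)*d1 + d2 - 1 > 0 := by linarith
  have hc : ((d1:ℝ) + d2) + d1 - 1 > 0 := by linarith
  constructor
  · rw [div_eq_div_iff (by positivity) (by positivity)]
    field_simp
    ring
  · apply div_neg_of_neg_of_pos
    · nlinarith [mul_pos (mul_pos h1p ha) (show (0:ℝ) < 2*(d1:ℝ)+d2 by linarith)]
    · positivity
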